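/- Let c > 0, τ₂ ≥ 0, let w : [0, 1] → ℝ be continuously differentiable, let y ∈ ℝ with |w(0)| ≤ τ₂|y|, let θ : [0, 1] → ℝ and δ : [0, 1] → ℝ be continuous, and let K : [0, 1] → ℝ be continuous with |K(x)| ≤ |y| for all x ∈ [0, 1]. Then (4e/c)·∫₀¹ e^{−x}·w(x)·(−c·w'(x) + θ(x)K(x) + δ(x)) dx ≤ −∫₀¹ w(x)² dx + 2e·τ₂²·y² + (8e²/c²)·(∫₀¹ θ(x)² dx)·y² + (8e²/c²)·∫₀¹ δ(x)² dx. -/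

import Mathlib

set_option maxHeartbeats 1000000


/-- The dissipation estimate for the transport PDE (Case B): for `c > 0`, `τ₂ ≥ 0`, a `C¹`
function `w` with `|w(0)| ≤ τ₂|y|`, continuous `θ, δ` and continuous `K` with `|K(x)| ≤ |y|`
on `[0,1]`,
`(4e/c)∫₀¹ e^{−x}w(−cw' + θK + δ) ≤ −∫₀¹ w² + 2eτ₂²y² + (8e²/c²)(∫₀¹ θ²)y² + (8e²/c²)∫₀¹ δ²`. -/
theorem transport_dissipation_estimate (c τ₂ : ℝ) (hc : 0 < c) (hτ₂ : 0 ≤ τ₂)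
    (w θ δ K : ℝ → ℝ) (y : ℝ)
    (hw : ContDiff ℝ 1 w) (hw0 : |w 0| ≤ τ₂ * |y|)
    (hθ : Continuous θ) (hδ : Continuous δ) (hK : Continuous K)
    (hKy : ∀ x ∈ Set.Icc (0 : ℝ) 1, |K x| ≤ |y|) :
    (4 * Real.exp 1 / c) *
        ∫ x in (0 : ℝ)..1, Real.exp (-x) * w x * (-c * deriv w x + θ x * K x + δ x) ≤
      -(∫ x in (0 : ℝ)..1, (w x) ^ 2) + 2 * Real.exp 1 * τ₂ ^ 2 * y ^ 2 +
        (8 * (Real.exp 1) ^ 2 / c ^ 2) * (∫ x in (0 : ℝ)..1, (θ x) ^ 2) * y ^ 2 +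
        (8 * (Real.exp 1) ^ 2 / c ^ 2) * ∫ x in (0 : ℝ)..1, (δ x) ^ 2 := by
  have hwd : Differentiable ℝ w := hw.differentiable one_ne_zero
  have hw' : Continuous (deriv w) := hw.continuous_deriv le_rfl
  have hwc : Continuous w := hwd.continuous
  set e1 := Real.exp 1 with he1
  have he1pos : (0:ℝ) < e1 := Real.exp_pos 1
  have hcne : c ≠ 0 := ne_of_gt hc
  -- continuity of all integrands
  have hE : Continuous fun x : ℝ => Real.exp (-x) := Real.continuous_exp.comp continuous_neg
  have hI1c : Continuous fun x : ℝ => Real.exp (-x) * w x * deriv w x :=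
    (hE.mul hwc).mul hw'
  have hI2c : Continuous fun x : ℝ => Real.exp (-x) * w x * (θ x * K x + δ x) :=
    (hE.mul hwc).mul ((hθ.mul hK).add hδ)
  have hJc : Continuous fun x : ℝ => Real.exp (-x) * (w x) ^ 2 := hE.mul (hwc.pow 2)
  -- derivative of g x = exp(-x) * w x ^ 2
  have hg : ∀ x : ℝ, HasDerivAt (fun t => Real.exp (-t) * (w t) ^ 2)
      (-Real.exp (-x) * (w x) ^ 2 + Real.exp (-x) * (2 * w x * deriv w x)) x := by
    intro x
    have h1 : HasDerivAt (fun t : ℝ => Real.exp (-t)) (-Real.exp (-x)) x := by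
      simpa [Function.comp_def] using (Real.hasDerivAt_exp (-x)).comp x (hasDerivAt_neg x)
    have h2 : HasDerivAt (fun t => (w t) ^ 2) (2 * w x * deriv w x) x := by
      have := ((hwd x).hasDerivAt).fun_pow 2
      simpa [mul_comm, mul_assoc] using this
    simpa using h1.fun_mul h2
  -- FTC
  have hFTC : (∫ x in (0:ℝ)..1,
      (-Real.exp (-x) * (w x) ^ 2 + Real.exp (-x) * (2 * w x * deriv w x))) =
      Real.exp (-1) * (w 1) ^ 2 - Real.exp (-0) * (w 0) ^ 2 := by
    have hcont : Continuous fun x : ℝ =>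
        -Real.exp (-x) * (w x) ^ 2 + Real.exp (-x) * (2 * w x * deriv w x) :=
      ((hE.neg.mul (hwc.pow 2))).add (hE.mul ((continuous_const.mul hwc).mul hw'))
    exact intervalIntegral.integral_eq_sub_of_hasDerivAt (fun x _ => hg x)
      (hcont.intervalIntegrable 0 1)
  set I1 := ∫ x in (0:ℝ)..1, Real.exp (-x) * w x * deriv w x with hI1
  set I2 := ∫ x in (0:ℝ)..1, Real.exp (-x) * w x * (θ x * K x + δ x) with hI2
  set J := ∫ x in (0:ℝ)..1, Real.exp (-x) * (w x) ^ 2 with hJ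
  set W := ∫ x in (0:ℝ)..1, (w x) ^ 2 with hW
  -- split FTC integral
  have hsplit : (∫ x in (0:ℝ)..1,
      (-Real.exp (-x) * (w x) ^ 2 + Real.exp (-x) * (2 * w x * deriv w x))) = -J + 2 * I1 := by
    rw [intervalIntegral.integral_add
      ((hE.fun_neg.fun_mul (hwc.fun_pow 2)).intervalIntegrable 0 1)
      ((hE.fun_mul ((continuous_const.fun_mul hwc).fun_mul hw')).intervalIntegrable 0 1)]
    have h1 : (∫ x in (0:ℝ)..1, -Real.exp (-x) * (w x) ^ 2) = -J := by
      rw [hJ, ← intervalIntegral.integral_neg]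
      congr 1; ext x; ring
    have h2 : (∫ x in (0:ℝ)..1, Real.exp (-x) * (2 * w x * deriv w x)) = 2 * I1 := by
      rw [hI1, ← intervalIntegral.integral_const_mul]
      congr 1; ext x; ring
    rw [h1, h2]
  have hI1val : I1 = (Real.exp (-1) * (w 1) ^ 2 - (w 0) ^ 2 + J) / 2 := by
    have := hFTC
    rw [hsplit] at this
    simp only [neg_zero, Real.exp_zero, one_mul] at this
    linarith
  -- decompose the main integral
  have hLdec : (∫ x in (0:ℝ)..1,
      Real.exp (-x) * w x * (-c * deriv w x + θ x * K x + δ x)) = -c * I1 + I2 := by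
    have : (∫ x in (0:ℝ)..1,
        Real.exp (-x) * w x * (-c * deriv w x + θ x * K x + δ x)) =
        ∫ x in (0:ℝ)..1,
          (-c * (Real.exp (-x) * w x * deriv w x)
            + Real.exp (-x) * w x * (θ x * K x + δ x)) := by
      congr 1; ext x; ring
    rw [this, intervalIntegral.integral_add
      ((continuous_const.fun_mul hI1c).intervalIntegrable 0 1) (hI2c.intervalIntegrable 0 1),
      intervalIntegral.integral_const_mul]
  -- W ≤ e1 * J
  have hWJ : W ≤ e1 * J := by
    rw [hJ, ← intervalIntegral.integral_const_mul]
    apply intervalIntegral.integral_mono_on (by norm_num)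
      (((hwc.fun_pow 2)).intervalIntegrable 0 1)
      ((continuous_const.fun_mul hJc).intervalIntegrable 0 1)
    intro x hx
    have h1 : (1:ℝ) ≤ e1 * Real.exp (-x) := by
      rw [he1, ← Real.exp_add]
      exact Real.one_le_exp (by linarith [hx.2])
    nlinarith [sq_nonneg (w x)]
  -- Young bound on I2 part
  set b := 4 * e1 / c with hb
  have hbpos : 0 < b := by positivity
  have hb2 : b ^ 2 = 16 * e1 ^ 2 / c ^ 2 := by rw [hb, div_pow]; ring
  set C := 8 * e1 ^ 2 / c ^ 2 with hC
  have hCb : C = b ^ 2 / 2 := by rw [hC, hb2]; ring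
  have hYoung : b * I2 ≤ W + C * (y ^ 2 * (∫ x in (0:ℝ)..1, (θ x) ^ 2)
      + ∫ x in (0:ℝ)..1, (δ x) ^ 2) := by
    have hstep : b * I2 ≤ ∫ x in (0:ℝ)..1,
        ((w x) ^ 2 + C * (y ^ 2 * (θ x) ^ 2 + (δ x) ^ 2)) := by
      rw [hI2, ← intervalIntegral.integral_const_mul]
      apply intervalIntegral.integral_mono_on (by norm_num)
        ((continuous_const.fun_mul hI2c).intervalIntegrable 0 1)
        (((hwc.fun_pow 2).fun_add (continuous_const.fun_mul
          ((continuous_const.fun_mul (hθ.fun_pow 2)).fun_add (hδ.fun_pow 2)))).intervalIntegrable 0 1)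
      intro x hx
      have hE1 : Real.exp (-x) ≤ 1 := Real.exp_le_one_iff.mpr (by linarith [hx.1])
      have hE0 : 0 ≤ Real.exp (-x) := (Real.exp_pos _).le
      have hK2 : (K x) ^ 2 ≤ y ^ 2 := by
        have := hKy x hx
        nlinarith [abs_nonneg (K x), abs_nonneg y, sq_abs (K x), sq_abs y]
      have step1 : ∀ u v : ℝ, u * v ≤ u ^ 2 / 2 + v ^ 2 / 2 := by
        intro u v; nlinarith [sq_nonneg (u - v)]
      have hE2 : (Real.exp (-x)) ^ 2 ≤ 1 := by nlinarith
      have h2 : (b * Real.exp (-x) * θ x * K x) ^ 2 ≤ b ^ 2 * (θ x) ^ 2 * y ^ 2 := by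
        have hEK : (Real.exp (-x)) ^ 2 * (K x) ^ 2 ≤ y ^ 2 := by
          calc (Real.exp (-x)) ^ 2 * (K x) ^ 2 ≤ 1 * (K x) ^ 2 :=
                mul_le_mul_of_nonneg_right hE2 (sq_nonneg _)
            _ = (K x) ^ 2 := one_mul _
            _ ≤ y ^ 2 := hK2
        calc (b * Real.exp (-x) * θ x * K x) ^ 2
            = b ^ 2 * (θ x) ^ 2 * ((Real.exp (-x)) ^ 2 * (K x) ^ 2) := by ring
          _ ≤ b ^ 2 * (θ x) ^ 2 * y ^ 2 :=
              mul_le_mul_of_nonneg_left hEK (by positivity)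
      have h3 : (b * Real.exp (-x) * δ x) ^ 2 ≤ b ^ 2 * (δ x) ^ 2 := by
        calc (b * Real.exp (-x) * δ x) ^ 2
            = b ^ 2 * (δ x) ^ 2 * (Real.exp (-x)) ^ 2 := by ring
          _ ≤ b ^ 2 * (δ x) ^ 2 * 1 := mul_le_mul_of_nonneg_left hE2 (by positivity)
          _ = b ^ 2 * (δ x) ^ 2 := mul_one _
      have e1a := step1 (w x) (b * Real.exp (-x) * θ x * K x)
      have e2a := step1 (w x) (b * Real.exp (-x) * δ x)
      have key : b * (Real.exp (-x) * w x * (θ x * K x + δ x)) =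
          w x * (b * Real.exp (-x) * θ x * K x) + w x * (b * Real.exp (-x) * δ x) := by
        ring
      rw [hCb, key]
      linarith [e1a, e2a, h2, h3]
    calc b * I2 ≤ _ := hstep
      _ = W + C * (y ^ 2 * (∫ x in (0:ℝ)..1, (θ x) ^ 2)
          + ∫ x in (0:ℝ)..1, (δ x) ^ 2) := by
        rw [intervalIntegral.integral_add ((hwc.fun_pow 2).intervalIntegrable 0 1)
          ((continuous_const.fun_mul ((continuous_const.fun_mul (hθ.fun_pow 2)).fun_add
            (hδ.fun_pow 2))).intervalIntegrable 0 1),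
          intervalIntegral.integral_const_mul,
          intervalIntegral.integral_add
            ((continuous_const.fun_mul (hθ.fun_pow 2)).intervalIntegrable 0 1)
            ((hδ.fun_pow 2).intervalIntegrable 0 1),
          intervalIntegral.integral_const_mul]
  -- boundary term
  have hw0sq : (w 0) ^ 2 ≤ τ₂ ^ 2 * y ^ 2 := by
    nlinarith [abs_nonneg (w 0), abs_nonneg y, sq_abs (w 0), sq_abs y,
      mul_nonneg hτ₂ (abs_nonneg y)]
  have hee : e1 * Real.exp (-1) = 1 := by
    rw [he1, ← Real.exp_add]; norm_num
  -- assemble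
  rw [hLdec]
  have hexpand : (4 * e1 / c) * (-c * I1 + I2) = -4 * e1 * I1 + b * I2 := by
    rw [hb]; field_simp
  rw [hexpand, hI1val]
  have hee2 : e1 * Real.exp (-1) * (w 1) ^ 2 = (w 1) ^ 2 := by rw [hee, one_mul]
  have hbd : 2 * e1 * (w 0) ^ 2 ≤ 2 * e1 * (τ₂ ^ 2 * y ^ 2) :=
    mul_le_mul_of_nonneg_left hw0sq (by positivity)
  linarith [hYoung, hWJ, hee2, hbd, sq_nonneg (w 1)]
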